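/- Let G be a directed graph, E⁺ a set of edges on V(G), and let H be a graph on V(G) containing: (1) for each strongly connected component C of G, a directed cycle on the vertices of C; (2) for each edge (u,v) ∈ E⁺ and each vertex w, the edge (v,w) if v can reach w in G ∪ E⁺, and the edge (w,v) if w can reach v in G ∪ E⁺. Then for all vertices u, v: u and v are strongly connected in G ∪ E⁺ if and only if they are strongly connected in H. -/

import Mathlib

/-- Two vertices are strongly connected: each reaches the other. -/
def SConn {V : Type*} (E : V → V → Prop) (u v : V) : Prop :=
  Relation.ReflTransGen E u v ∧ Relation.ReflTransGen E v u

/-- Let `G` have edges `E`, let `E⁺` (`Eplus`) be extra edges, and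
`E'` the edge relation of `G ∪ E⁺`. Let `H` consist of (1) for each SCC of `G` a directed
cycle on its vertices (encoded by a relation `Hc` whose edges stay inside SCCs of `G`
and which strongly connects every SCC of `G`), and (2) for each head `v` of an `E⁺` edge
and each `w`, the edge `(v,w)` if `v` reaches `w` in `G ∪ E⁺` and the edge `(w,v)` if `w`
reaches `v` in `G ∪ E⁺`. Then `u,v` are strongly connected in `G ∪ E⁺` iff they are
strongly connected in `H`. -/
theorem scc_certificate_graph
    {V : Type*} [Fintype V] (E Eplus Hc : V → V → Prop)
    (E' : V → V → Prop) (hE' : ∀ x y, E' x y ↔ (E x y ∨ Eplus x y))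
    (hcyc_sub : ∀ x y, Hc x y → SConn E x y)
    (hcyc_conn : ∀ x y, SConn E x y → Relation.ReflTransGen Hc x y)
    (H : V → V → Prop)
    (hH : ∀ x y, H x y ↔
      (Hc x y ∨ (Relation.ReflTransGen E' x y ∧ ((∃ a, Eplus a x) ∨ (∃ a, Eplus a y))))) :
    ∀ u v : V, SConn E' u v ↔ SConn H u v := by
  have hE'E : ∀ x y, E x y → E' x y := fun x y h => (hE' x y).2 (Or.inl h)
  have hHtoE' : ∀ x y, H x y → Relation.ReflTransGen E' x y := by
    intro x y hxy
    rcases (hH x y).1 hxy with h | ⟨h, _⟩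
    · exact Relation.ReflTransGen.mono hE'E x y ((hcyc_sub x y h).1)
    · exact h
  have hRT : ∀ x y, Relation.ReflTransGen H x y → Relation.ReflTransGen E' x y := by
    intro x y h
    induction h with
    | refl => exact .refl
    | tail _ hbc ih => exact ih.trans (hHtoE' _ _ hbc)
  have split : ∀ a b, Relation.ReflTransGen E' a b →
      Relation.ReflTransGen E a b ∨
        ∃ x t, Relation.ReflTransGen E' a x ∧ Eplus x t ∧ Relation.ReflTransGen E' t b := by
    intro a b h
    induction h using Relation.ReflTransGen.head_induction_on with
    | refl => exact Or.inl .refl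
    | head hab hcb ih =>
      rcases (hE' _ _).1 hab with hE | hP
      · rcases ih with h | ⟨x, t, h1, h2, h3⟩
        · exact Or.inl (.head hE h)
        · exact Or.inr ⟨x, t, .head hab h1, h2, h3⟩
      · exact Or.inr ⟨_, _, .refl, hP, hcb⟩
  have key : ∀ a b x t, Relation.ReflTransGen E' a x → Eplus x t →
      Relation.ReflTransGen E' t b → Relation.ReflTransGen E' b a → SConn H a b := by
    intro a b x t hax hxt htb hba
    have ht : ∃ c, Eplus c t := ⟨x, hxt⟩
    have hat : Relation.ReflTransGen E' a t := hax.tail ((hE' x t).2 (Or.inr hxt))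
    have e1 : H a t := (hH a t).2 (Or.inr ⟨hat, Or.inr ht⟩)
    have e2 : H t b := (hH t b).2 (Or.inr ⟨htb, Or.inl ht⟩)
    have e3 : H b t := (hH b t).2 (Or.inr ⟨hba.trans hat, Or.inr ht⟩)
    have e4 : H t a := (hH t a).2 (Or.inr ⟨htb.trans hba, Or.inl ht⟩)
    exact ⟨(Relation.ReflTransGen.single e1).tail e2,
      (Relation.ReflTransGen.single e3).tail e4⟩
  intro u v
  constructor
  · rintro ⟨huv, hvu⟩
    rcases split u v huv with h1 | ⟨x, t, hux, hxt, htv⟩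
    · rcases split v u hvu with h2 | ⟨x, t, hvx, hxt, htu⟩
      · refine ⟨Relation.ReflTransGen.mono ?_ u v (hcyc_conn u v ⟨h1, h2⟩), Relation.ReflTransGen.mono ?_ v u (hcyc_conn v u ⟨h2, h1⟩)⟩ <;>
          exact fun a b h => (hH a b).2 (Or.inl h)
      · have := key v u x t hvx hxt htu huv
        exact ⟨this.2, this.1⟩
    · exact key u v x t hux hxt htv hvu
  · rintro ⟨h1, h2⟩
    exact ⟨hRT u v h1, hRT v u h2⟩
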